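/- Let (q_n) ⊂ (0,1) with q_n → 1 and q_n^n → a for some a ∈ [0,1). Then for every x ≥ 0, D*_{n,q_n}(e_2; x) → x^2 as n → ∞. -/

import Mathlib

open Real Filter Topology

noncomputable def theta (k : ℕ) : ℝ := if Even k then 0 else 1

noncomputable def gam (μ q : ℝ) : ℕ → ℝ
  | 0 => 1
  | n + 1 => ((1 - q ^ (2 * μ * theta (n + 1) + (n + 1 : ℝ))) / (1 - q)) * gam μ q n

/-- q-number of a real `a`: `[a]_q = (1-q^a)/(1-q)` (real exponentiation). -/
noncomputable def qnum (q a : ℝ) : ℝ := (1 - q ^ a) / (1 - q)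

/-- q-Dunkl exponential `E_{μ,q}`. -/
noncomputable def Eexp (μ q x : ℝ) : ℝ := ∑' k : ℕ, q ^ (k * (k - 1) / 2) * x ^ k / gam μ q k

/-- nodes of the Dunkl q-Szász-Mirakjan operator. -/
noncomputable def node (μ q : ℝ) (n k : ℕ) : ℝ :=
  (1 - q ^ (2 * μ * theta k + (k : ℝ))) / (q ^ ((k : ℝ) - 2) * (1 - q ^ n))

/-- Dunkl q-Szász-Mirakjan operator `D*_{n,q}`. -/
noncomputable def Dop (μ q : ℝ) (n : ℕ) (f : ℝ → ℝ) (x : ℝ) : ℝ :=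
  (1 / Eexp μ q (qnum q n * x)) *
    ∑' k : ℕ, (qnum q n * x) ^ k / gam μ q k * q ^ (k * (k - 1) / 2) * f (node μ q n k)


lemma theta_nonneg (k : ℕ) : 0 ≤ theta k := by unfold theta; split <;> norm_num

lemma theta_le_one (k : ℕ) : theta k ≤ 1 := by unfold theta; split <;> norm_num

lemma theta_succ (k : ℕ) : theta (k + 1) = 1 - theta k := by
  unfold theta; by_cases h : Even k <;> simp [h, Nat.even_add_one]

lemma tri_succ (k : ℕ) : (k + 1) * ((k + 1) - 1) / 2 = k * (k - 1) / 2 + k := by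
  have h1 := Nat.choose_two_right (k + 1)
  have h2 := Nat.choose_two_right k
  have h3 := Nat.choose_succ_succ k 1
  simp [Nat.choose_one_right] at h3
  omega

section
variable {μ q : ℝ} (hμ : 0 < μ) (hq0 : 0 < q) (hq1 : q < 1)
include hμ hq0 hq1

lemma gam_pos : ∀ k, 0 < gam μ q k := by
  intro k
  induction k with
  | zero => simp [gam]
  | succ n ih =>
    rw [gam]
    have he : (0:ℝ) < 2 * μ * theta (n + 1) + (n + 1 : ℝ) := by
      have h1 := theta_nonneg (n + 1)
      have h2 : 0 ≤ 2 * μ * theta (n + 1) := by positivity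
      have h3 : (0:ℝ) < (n:ℝ) + 1 := by positivity
      push_cast; linarith
    have : q ^ (2 * μ * theta (n + 1) + (n + 1 : ℝ)) < 1 :=
      Real.rpow_lt_one hq0.le hq1 he
    have h1 : 0 < 1 - q := by linarith
    have h2 : 0 < 1 - q ^ (2 * μ * theta (n + 1) + (n + 1 : ℝ)) := by linarith
    exact mul_pos (div_pos h2 h1) ih

lemma gam_one_le : ∀ k, 1 ≤ gam μ q k := by
  intro k
  induction k with
  | zero => simp [gam]
  | succ n ih =>
    rw [gam]
    have he : (1:ℝ) ≤ 2 * μ * theta (n + 1) + (n + 1 : ℝ) := by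
      have h1 := theta_nonneg (n + 1)
      have h2 : 0 ≤ 2 * μ * theta (n + 1) := by positivity
      have h3 : (1:ℝ) ≤ (n:ℝ) + 1 := by
        have : (0:ℝ) ≤ (n:ℝ) := Nat.cast_nonneg n
        linarith
      push_cast; linarith
    have hle : q ^ (2 * μ * theta (n + 1) + (n + 1 : ℝ)) ≤ q := by
      calc q ^ (2 * μ * theta (n + 1) + (n + 1 : ℝ)) ≤ q ^ (1:ℝ) :=
            Real.rpow_le_rpow_of_exponent_ge hq0 hq1.le he
        _ = q := Real.rpow_one q
    have h1 : 0 < 1 - q := by linarith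
    have : (1:ℝ) ≤ (1 - q ^ (2 * μ * theta (n + 1) + (n + 1 : ℝ))) / (1 - q) := by
      rw [le_div_iff₀ h1]; linarith
    nlinarith [gam_pos hμ hq0 hq1 n]

end

set_option maxHeartbeats 1000000 in
lemma main_bound (μ q : ℝ) (hμ : 0 < μ) (hq0 : 0 < q) (hq1 : q < 1)
    (n : ℕ) (hn : 1 ≤ n) (x : ℝ) (hx : 0 ≤ x) :
    |Dop μ q n (fun t => t ^ 2) x - q * x ^ 2| ≤
      x * q * (|q * (1 - q ^ ((1:ℝ) + 2 * μ)) / (1 - q ^ n)| +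
               |q ^ (2 * μ + 1) * (1 - q ^ ((1:ℝ) - 2 * μ)) / (1 - q ^ n)|) := by
  have hq' : (1:ℝ) - q ≠ 0 := by intro h; nlinarith
  have hqn : q ^ n < 1 := pow_lt_one₀ hq0.le hq1 (by omega)
  have hqnpos : 0 < q ^ n := pow_pos hq0 n
  have hD : (0:ℝ) < 1 - q ^ n := by linarith
  have hD' : (1:ℝ) - q ^ n ≠ 0 := ne_of_gt hD
  set b : ℝ := qnum q (n:ℝ) * x with hbdef
  have hbx : b * (1 - q) = (1 - q ^ n) * x := by
    rw [hbdef, qnum, Real.rpow_natCast]; field_simp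
  have hb : 0 ≤ b := by
    rw [hbdef, qnum, Real.rpow_natCast]
    have h1 : (0:ℝ) < 1 - q := by linarith
    exact mul_nonneg (div_nonneg hD.le h1.le) hx
  -- the summand
  set t : ℕ → ℝ := fun k => b ^ k / gam μ q k * q ^ (k * (k - 1) / 2) with htdef
  have ht0 : t 0 = 1 := by simp [htdef, gam]
  have ht_nonneg : ∀ k, 0 ≤ t k := by
    intro k
    have := gam_pos hμ hq0 hq1 k
    simp only [htdef]
    positivity
  have hgam_mono : ∀ k, gam μ q k ≤ gam μ q (k + 1) := by
    intro k
    rw [gam]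
    nth_rewrite 1 [show gam μ q k = 1 * gam μ q k by ring]
    apply mul_le_mul_of_nonneg_right _ (gam_pos hμ hq0 hq1 k).le
    have h3 : (1:ℝ) ≤ (k:ℝ) + 1 := by
      have : (0:ℝ) ≤ (k:ℝ) := Nat.cast_nonneg k
      linarith
    have he : (1:ℝ) ≤ 2 * μ * theta (k + 1) + (k + 1 : ℝ) := by
      have h1 := theta_nonneg (k + 1)
      have h2 : 0 ≤ 2 * μ * theta (k + 1) := by positivity
      push_cast
      linarith
    have hle : q ^ (2 * μ * theta (k + 1) + (k + 1 : ℝ)) ≤ q := by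
      calc q ^ (2 * μ * theta (k + 1) + (k + 1 : ℝ)) ≤ q ^ (1:ℝ) :=
            Real.rpow_le_rpow_of_exponent_ge hq0 hq1.le he
        _ = q := Real.rpow_one q
    rw [le_div_iff₀ (by linarith : (0:ℝ) < 1 - q)]
    linarith
  have ht_ratio : ∀ k, t (k + 1) ≤ b * q ^ k * t k := by
    intro k
    have hg := gam_pos hμ hq0 hq1 k
    have hg' := gam_pos hμ hq0 hq1 (k + 1)
    have := hgam_mono k
    calc t (k + 1) = b ^ (k+1) / gam μ q (k+1) * q ^ ((k+1) * ((k+1) - 1) / 2) := rfl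
      _ ≤ b ^ (k+1) / gam μ q k * q ^ ((k+1) * ((k+1) - 1) / 2) := by
          gcongr
      _ = b * q ^ k * t k := by
          rw [tri_succ, pow_add, htdef]; ring
  have ht_sum : Summable t := by
    have hlim : Tendsto (fun k : ℕ => b * q ^ k) atTop (𝓝 0) := by
      have := tendsto_pow_atTop_nhds_zero_of_lt_one hq0.le hq1
      simpa using this.const_mul b
    have hev : ∀ᶠ k in atTop, ‖t (k + 1)‖ ≤ (1/2) * ‖t k‖ := by
      filter_upwards [hlim.eventually_le_const (by norm_num : (0:ℝ) < 1/2)] with k hk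
      have h1 : t (k + 1) ≤ (1/2) * t k := by
        calc t (k + 1) ≤ b * q ^ k * t k := ht_ratio k
          _ ≤ (1/2) * t k := mul_le_mul_of_nonneg_right hk (ht_nonneg k)
      rw [Real.norm_eq_abs, Real.norm_eq_abs, abs_of_nonneg (ht_nonneg _), abs_of_nonneg (ht_nonneg _)]
      exact h1
    exact summable_of_ratio_norm_eventually_le (by norm_num) hev
  have hE : Eexp μ q b = ∑' k, t k := by
    apply tsum_congr; intro k; rw [htdef]; ring
  have hE1 : (1:ℝ) ≤ Eexp μ q b := by
    rw [hE, ← ht0]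
    exact Summable.le_tsum ht_sum 0 fun j _ => ht_nonneg j
  have hEpos : 0 < Eexp μ q b := lt_of_lt_of_le one_pos hE1
  have hnode0 : node μ q n 0 = 0 := by
    simp [node, theta, Real.rpow_natCast]
  set d : ℕ → ℝ := fun k =>
    q ^ (2 * μ * theta k + 1) * (1 - q ^ (1 + 2 * μ * (1 - 2 * theta k))) / (1 - q ^ n)
    with hddef
  have hxb : x = b * (1 - q) / (1 - q ^ n) := by
    rw [hbx]; field_simp
  have hgrel : ∀ k : ℕ, 1 - q ^ (2 * μ * theta (k+1) + ((k:ℝ)+1)) =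
      (1 - q) * gam μ q (k+1) / gam μ q k := by
    intro k
    rw [gam]
    have := (gam_pos hμ hq0 hq1 k).ne'
    field_simp
  have hnodesucc : ∀ k : ℕ, node μ q n (k+1) =
      ((1 - q) * gam μ q (k+1) / gam μ q k) / ((q ^ k / q) * (1 - q ^ n)) := by
    intro k
    rw [node, show (((k+1:ℕ)):ℝ) = (k:ℝ)+1 by push_cast; ring, hgrel k,
      show ((k:ℝ)+1) - 2 = (k:ℝ) - 1 by ring,
      Real.rpow_sub hq0, Real.rpow_natCast, Real.rpow_one]
  have hkey : ∀ k, t (k+1) * node μ q n (k+1) = x * q * t k := by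
    intro k
    have hgk := (gam_pos hμ hq0 hq1 k).ne'
    have hgk1 := (gam_pos hμ hq0 hq1 (k+1)).ne'
    rw [hnodesucc k, htdef]
    simp only
    rw [tri_succ, pow_add, pow_succ, hxb]
    field_simp
    ring
  have hsplit : ∀ k, node μ q n (k+1) = node μ q n k / q + d k := by
    intro k
    have h2 : ((2:ℝ)) = ((2:ℕ):ℝ) := by norm_num
    have hden : q ^ ((k:ℝ) - 2) = q ^ k / q ^ 2 := by
      rw [Real.rpow_sub hq0, Real.rpow_natCast, h2, Real.rpow_natCast]
    have hA2 : q ^ (2*μ*theta k + (k:ℝ)) = q ^ (2*μ*theta k + 1) * (q ^ k / q) := by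
      rw [show (2*μ*theta k + (k:ℝ)) = (2*μ*theta k + 1) + ((k:ℝ) - 1) by ring,
        Real.rpow_add hq0, Real.rpow_sub hq0, Real.rpow_natCast, Real.rpow_one]
    have hA : q ^ (2*μ*theta (k+1) + ((k:ℝ)+1)) =
        (q ^ (2*μ*theta k + 1) * (q ^ k / q)) * q ^ (1 + 2*μ*(1 - 2*theta k)) := by
      rw [show (2*μ*theta (k+1) + ((k:ℝ)+1)) = (2*μ*theta k + (k:ℝ)) + (1 + 2*μ*(1-2*theta k)) by
          rw [theta_succ]; ring, Real.rpow_add hq0, hA2]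
    rw [node, node, hddef]
    simp only
    rw [show (((k+1:ℕ)):ℝ) = (k:ℝ)+1 by push_cast; ring]
    rw [show ((k:ℝ)+1) - 2 = (k:ℝ) - 1 by ring, Real.rpow_sub hq0, Real.rpow_natCast,
      Real.rpow_one, hden, hA2, hA]
    have hqk : (q:ℝ)^k ≠ 0 := (pow_pos hq0 k).ne'
    field_simp
    ring
  have hd_cases : ∀ k, d k = q * (1 - q ^ ((1:ℝ) + 2*μ)) / (1 - q^n) ∨
      d k = q ^ (2*μ+1) * (1 - q ^ ((1:ℝ) - 2*μ)) / (1 - q^n) := by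
    intro k
    by_cases h : Even k
    · left
      rw [hddef]; simp only [theta, if_pos h]
      rw [show 2*μ*0+1 = (1:ℝ) by ring, Real.rpow_one, show 1 + 2*μ*(1-2*0) = (1:ℝ)+2*μ by ring]
    · right
      rw [hddef]; simp only [theta, if_neg h]
      rw [show 2*μ*1+1 = 2*μ+1 by ring, show 1+2*μ*(1-2*1) = (1:ℝ)-2*μ by ring]
  set M : ℝ := |q * (1 - q ^ ((1:ℝ) + 2 * μ)) / (1 - q ^ n)| +
               |q ^ (2 * μ + 1) * (1 - q ^ ((1:ℝ) - 2 * μ)) / (1 - q ^ n)| with hMdef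
  have hd_bound : ∀ k, |d k| ≤ M := by
    intro k
    rcases hd_cases k with h | h <;> rw [h, hMdef]
    · exact le_add_of_nonneg_right (abs_nonneg _)
    · exact le_add_of_nonneg_left (abs_nonneg _)
  have hsum_tn : Summable (fun k => t k * node μ q n k) := by
    have h1 : Summable (fun k => t (k+1) * node μ q n (k+1)) := by
      simp only [hkey]; exact ht_sum.mul_left (x*q)
    exact (summable_nat_add_iff 1).mp h1
  have hsum_td : Summable (fun k => t k * d k) := by
    apply Summable.of_norm_bounded (g := fun k => M * t k) (ht_sum.mul_left M)
    intro k
    rw [Real.norm_eq_abs, abs_mul, abs_of_nonneg (ht_nonneg k)]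
    calc t k * |d k| ≤ t k * M := mul_le_mul_of_nonneg_left (hd_bound k) (ht_nonneg k)
      _ = M * t k := mul_comm _ _
  have hnsf : ∀ k, t k * node μ q n (k+1) = t k * node μ q n k / q + t k * d k := by
    intro k; rw [hsplit k]; ring
  have hsum_tn1 : Summable (fun k => t k * node μ q n (k+1)) := by
    exact ((hsum_tn.div_const q).add hsum_td).congr fun k => (hnsf k).symm
  have htn_val : ∑' k, t k * node μ q n k = x * q * ∑' k, t k := by
    rw [Summable.tsum_eq_zero_add hsum_tn]
    simp only [hkey, hnode0, mul_zero, zero_add]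
    exact tsum_mul_left
  have htn1_val : ∑' k, t k * node μ q n (k+1) = x * (∑' k, t k) + ∑' k, t k * d k := by
    rw [tsum_congr hnsf, Summable.tsum_add (hsum_tn.div_const q) hsum_td, tsum_div_const, htn_val]
    field_simp
  set F : ℕ → ℝ := fun k => t k * (node μ q n k)^2 with hFdef
  have hF0 : F 0 = 0 := by simp [hFdef, hnode0]
  have hFsucc : ∀ k, F (k+1) = x*q*(t k * node μ q n (k+1)) := by
    intro k
    calc F (k+1) = (t (k+1) * node μ q n (k+1)) * node μ q n (k+1) := by
          rw [hFdef]; ring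
      _ = x*q*(t k * node μ q n (k+1)) := by rw [hkey k]; ring
  have hsumF : Summable F := by
    have h1 : Summable (fun k => F (k+1)) := by
      simp only [hFsucc]; exact hsum_tn1.mul_left (x*q)
    exact (summable_nat_add_iff 1).mp h1
  have hFval : ∑' k, F k = x^2*q*(∑' k, t k) + x*q*(∑' k, t k * d k) := by
    rw [Summable.tsum_eq_zero_add hsumF, hF0, zero_add]
    calc ∑' k, F (k+1) = ∑' k, x*q*(t k * node μ q n (k+1)) := tsum_congr hFsucc
      _ = x*q * ∑' k, t k * node μ q n (k+1) := tsum_mul_left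
      _ = x*q * (x * (∑' k, t k) + ∑' k, t k * d k) := by rw [htn1_val]
      _ = _ := by ring
  have hDop : Dop μ q n (fun t => t^2) x = (1 / Eexp μ q b) * ∑' k, F k := by
    rw [Dop, ← hbdef]
  have hdiff : Dop μ q n (fun t => t^2) x - q*x^2 =
      (x*q*(∑' k, t k * d k)) / Eexp μ q b := by
    rw [hDop, hFval, ← hE]
    field_simp
    ring
  have hTb : |∑' k, t k * d k| ≤ M * Eexp μ q b := by
    have habs : Summable (fun k => |t k * d k|) := hsum_td.abs
    have h1 : |∑' k, t k * d k| ≤ ∑' k, |t k * d k| := by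
      calc |∑' k, t k * d k| = ‖∑' k, t k * d k‖ := (Real.norm_eq_abs _).symm
        _ ≤ ∑' k, ‖t k * d k‖ :=
            norm_tsum_le_tsum_norm (habs.congr fun k => (Real.norm_eq_abs _).symm)
        _ = ∑' k, |t k * d k| := tsum_congr fun k => Real.norm_eq_abs _
    have h2 : ∑' k, |t k * d k| ≤ ∑' k, M * t k := by
      apply Summable.tsum_le_tsum _ habs (ht_sum.mul_left M)
      intro k
      rw [abs_mul, abs_of_nonneg (ht_nonneg k)]
      calc t k * |d k| ≤ t k * M := mul_le_mul_of_nonneg_left (hd_bound k) (ht_nonneg k)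
        _ = M * t k := mul_comm _ _
    calc |∑' k, t k * d k| ≤ ∑' k, M * t k := le_trans h1 h2
      _ = M * ∑' k, t k := tsum_mul_left
      _ = M * Eexp μ q b := by rw [hE]
  rw [hdiff, abs_div, abs_of_pos hEpos, abs_mul, abs_mul,
    abs_of_nonneg hx, abs_of_nonneg hq0.le, div_le_iff₀ hEpos]
  have hM0 : 0 ≤ M := by rw [hMdef]; positivity
  nlinarith [mul_nonneg hx hq0.le, hTb, abs_nonneg (∑' k, t k * d k)]

theorem Dop_e2_tendsto (μ : ℝ) (hμ : 0 < μ) (qs : ℕ → ℝ)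
    (hq : ∀ n, 0 < qs n ∧ qs n < 1)
    (hq1 : Tendsto qs atTop (𝓝 1)) (a : ℝ) (ha0 : 0 ≤ a) (ha1 : a < 1)
    (hqa : Tendsto (fun n => qs n ^ n) atTop (𝓝 a))
    (x : ℝ) (hx : 0 ≤ x) :
    Tendsto (fun n => Dop μ (qs n) n (fun t => t ^ 2) x) atTop (𝓝 (x ^ 2)) := by
  set Mf : ℕ → ℝ := fun n =>
    |qs n * (1 - qs n ^ ((1:ℝ) + 2 * μ)) / (1 - qs n ^ n)| +
    |qs n ^ (2 * μ + 1) * (1 - qs n ^ ((1:ℝ) - 2 * μ)) / (1 - qs n ^ n)| with hMf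
  have hne : (1:ℝ) - a ≠ 0 := by linarith
  have hden : Tendsto (fun n => 1 - qs n ^ n) atTop (𝓝 (1 - a)) :=
    tendsto_const_nhds.sub hqa
  have h1a : Tendsto (fun n => qs n ^ ((1:ℝ) + 2 * μ)) atTop (𝓝 1) := by
    simpa using hq1.rpow_const (p := (1:ℝ) + 2 * μ) (Or.inl one_ne_zero)
  have h1b : Tendsto (fun n => qs n ^ (2 * μ + 1)) atTop (𝓝 1) := by
    simpa using hq1.rpow_const (p := 2 * μ + 1) (Or.inl one_ne_zero)
  have h1c : Tendsto (fun n => qs n ^ ((1:ℝ) - 2 * μ)) atTop (𝓝 1) := by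
    simpa using hq1.rpow_const (p := (1:ℝ) - 2 * μ) (Or.inl one_ne_zero)
  have t1 : Tendsto (fun n => qs n * (1 - qs n ^ ((1:ℝ) + 2 * μ)) / (1 - qs n ^ n))
      atTop (𝓝 (1 * (1 - 1) / (1 - a))) :=
    (hq1.mul (tendsto_const_nhds.sub h1a)).div hden hne
  have t2 : Tendsto (fun n => qs n ^ (2 * μ + 1) * (1 - qs n ^ ((1:ℝ) - 2 * μ)) / (1 - qs n ^ n))
      atTop (𝓝 (1 * (1 - 1) / (1 - a))) :=
    (h1b.mul (tendsto_const_nhds.sub h1c)).div hden hne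
  have hM : Tendsto Mf atTop (𝓝 0) := by
    have := t1.abs.add t2.abs
    simpa using this
  have hbd : ∀ᶠ n in atTop, ‖Dop μ (qs n) n (fun t => t ^ 2) x - qs n * x ^ 2‖ ≤
      x * qs n * Mf n := by
    filter_upwards [eventually_ge_atTop 1] with n hn
    rw [Real.norm_eq_abs]
    exact main_bound μ (qs n) hμ (hq n).1 (hq n).2 n hn x hx
  have hg : Tendsto (fun n => x * qs n * Mf n) atTop (𝓝 0) := by
    have h := ((tendsto_const_nhds (x := x)).mul hq1).mul hM
    simpa using h
  have h0 : Tendsto (fun n => Dop μ (qs n) n (fun t => t ^ 2) x - qs n * x ^ 2)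
      atTop (𝓝 0) := squeeze_zero_norm' hbd hg
  have h2 : Tendsto (fun n => qs n * x ^ 2) atTop (𝓝 (1 * x ^ 2)) := hq1.mul_const _
  have := h0.add h2
  simpa using this
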